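/- Let H₀ and H₁ be complex Hilbert spaces, α and γ bounded linear operators on H₀, β a bounded linear operator on H₁, and C : dom(C) ⊆ H₀ → H₁ densely defined and closed with Hilbert-space adjoint C*. Assume α = α*, β = β*, that there is c > 0 with ⟨αx, x⟩ ≥ c‖x‖² for all x ∈ H₀ and ⟨βy, y⟩ ≥ c‖y‖² for all y ∈ H₁, and that Re⟨γx, x⟩ ≥ 0 for all x ∈ H₀. Let √α and √β denote the (boundedly invertible) positive square roots of α and β. Then the operator A on H₀ × H₁ with domain dom(A) = {(u,v) : √α⁻¹u ∈ dom(C), √β⁻¹v ∈ dom(C*)}, defined by A(u,v) = (−√α⁻¹γ√α⁻¹u + √α⁻¹C*√β⁻¹v, −√β⁻¹C√α⁻¹u), is m-dissipative: Re⟨A(u,v), (u,v)⟩ ≤ 0 for all (u,v) ∈ dom(A), and for every (f,g) ∈ H₀ × H₁ there exists (u,v) ∈ dom(A) with (u,v) − A(u,v) = (f,g). -/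

import Mathlib

open Complex Filter
open scoped InnerProductSpace

section Helpers

variable {H : Type*} [NormedAddCommGroup H] [InnerProductSpace ℂ H] [CompleteSpace H]

lemma aux_inv_sa {s si : H →L[ℂ] H} (hs : IsSelfAdjoint s)
    (h1 : s.comp si = ContinuousLinearMap.id ℂ H) :
    IsSelfAdjoint si := by
  have h1' : s * si = 1 := h1
  have hstar : star si * s = 1 := by
    have := congrArg star h1'
    rwa [star_mul, star_one, hs.star_eq] at this
  have : star si = si := by
    calc star si = star si * (s * si) := by rw [h1', mul_one]
      _ = star si * s * si := by rw [mul_assoc]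
      _ = si := by rw [hstar, one_mul]
  exact this

lemma aux_move {s : H →L[ℂ] H} (hs : IsSelfAdjoint s) (x y : H) :
    ⟪x, s y⟫_ℂ = ⟪s x, y⟫_ℂ := by
  conv_lhs => rw [← hs.adjoint_eq]
  rw [ContinuousLinearMap.adjoint_inner_right]

omit [CompleteSpace H] in
lemma aux_apply {s t : H →L[ℂ] H} (h : s.comp t = ContinuousLinearMap.id ℂ H) (x : H) :
    s (t x) = x := by
  have := ContinuousLinearMap.ext_iff.mp h x
  simpa using this

end Helpers

lemma lax_solve {V : Type*} [NormedAddCommGroup V] [InnerProductSpace ℝ V] [CompleteSpace V]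
    (B : V →L[ℝ] V →L[ℝ] ℝ) (c' : ℝ) (hc' : 0 < c') (hco : ∀ p, c' * ‖p‖ * ‖p‖ ≤ B p p)
    (L : V →L[ℝ] ℝ) : ∃ p, ∀ q, B p q = L q := by
  have hB : IsCoercive B := ⟨c', hc', hco⟩
  let r : V := (InnerProductSpace.toDual ℝ V).symm L
  refine ⟨hB.continuousLinearEquivOfBilin.symm r, fun q => ?_⟩
  have h1 := hB.continuousLinearEquivOfBilin_apply (hB.continuousLinearEquivOfBilin.symm r) q
  rw [ContinuousLinearEquiv.apply_symm_apply] at h1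
  rw [← h1]
  exact InnerProductSpace.toDual_symm_apply

set_option maxHeartbeats 1000000 in
set_option synthInstance.maxHeartbeats 400000 in
/-- Let `H₀, H₁` be complex Hilbert spaces, `α, γ` bounded operators on `H₀`,
`β` a bounded operator on `H₁`, and `C` densely defined and closed with adjoint `C*`.
Assume `α = α*`, `β = β*`, both bounded below by `c > 0`, and `Re⟨γx, x⟩ ≥ 0`.
With `sa = √α`, `sai = √α⁻¹`, `sb = √β`, `sbi = √β⁻¹` (the positive square roots and their
bounded inverses), the operator `A(u,v) = (−√α⁻¹γ√α⁻¹u + √α⁻¹C*√β⁻¹v, −√β⁻¹C√α⁻¹u)` with domain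
`{(u,v) : √α⁻¹u ∈ dom C, √β⁻¹v ∈ dom C*}` is m-dissipative.
(The paper's inner product `⟨a, b⟩`, linear in the first argument, is Mathlib's `⟪b, a⟫_ℂ`.) -/
theorem stmt_0
    {H₀ H₁ : Type*} [NormedAddCommGroup H₀] [InnerProductSpace ℂ H₀] [CompleteSpace H₀]
    [NormedAddCommGroup H₁] [InnerProductSpace ℂ H₁] [CompleteSpace H₁]
    (α γ : H₀ →L[ℂ] H₀) (β : H₁ →L[ℂ] H₁)
    (C : H₀ →ₗ.[ℂ] H₁)
    (hdense : Dense (C.domain : Set H₀))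
    (hCclosed : IsClosed (C.graph : Set (H₀ × H₁)))
    (hα : IsSelfAdjoint α) (hβ : IsSelfAdjoint β)
    (c : ℝ) (hc : 0 < c)
    (hαc : ∀ x : H₀, c * ‖x‖ ^ 2 ≤ (⟪x, α x⟫_ℂ).re)
    (hβc : ∀ y : H₁, c * ‖y‖ ^ 2 ≤ (⟪y, β y⟫_ℂ).re)
    (hγ : ∀ x : H₀, 0 ≤ (⟪x, γ x⟫_ℂ).re)
    -- `sa` is the positive square root of `α`, with bounded inverse `sai`
    (sa sai : H₀ →L[ℂ] H₀)
    (hsa : IsSelfAdjoint sa) (hsapos : ∀ x : H₀, 0 ≤ (⟪x, sa x⟫_ℂ).re)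
    (hsasq : sa.comp sa = α)
    (hsai : sa.comp sai = ContinuousLinearMap.id ℂ H₀)
    (hsai' : sai.comp sa = ContinuousLinearMap.id ℂ H₀)
    -- `sb` is the positive square root of `β`, with bounded inverse `sbi`
    (sb sbi : H₁ →L[ℂ] H₁)
    (hsb : IsSelfAdjoint sb) (hsbpos : ∀ y : H₁, 0 ≤ (⟪y, sb y⟫_ℂ).re)
    (hsbsq : sb.comp sb = β)
    (hsbi : sb.comp sbi = ContinuousLinearMap.id ℂ H₁)
    (hsbi' : sbi.comp sb = ContinuousLinearMap.id ℂ H₁) :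
    -- dissipativity: `Re ⟨A(u,v), (u,v)⟩ ≤ 0` on `dom A`
    (∀ (u : H₀) (v : H₁) (hu : sai u ∈ C.domain) (hv : sbi v ∈ C.adjoint.domain),
      (⟪u, -(sai (γ (sai u))) + sai (C.adjoint ⟨sbi v, hv⟩)⟫_ℂ
        + ⟪v, -(sbi (C ⟨sai u, hu⟩))⟫_ℂ).re ≤ 0) ∧
    -- range condition: `1 - A` is onto
    (∀ (f : H₀) (g : H₁), ∃ (u : H₀) (v : H₁) (hu : sai u ∈ C.domain)
        (hv : sbi v ∈ C.adjoint.domain),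
      u - (-(sai (γ (sai u))) + sai (C.adjoint ⟨sbi v, hv⟩)) = f ∧
      v - (-(sbi (C ⟨sai u, hu⟩))) = g) := by
  have saiSA : IsSelfAdjoint sai := aux_inv_sa hsa hsai
  have sbiSA : IsSelfAdjoint sbi := aux_inv_sa hsb hsbi
  constructor
  · intro u v hu hv
    set x : C.domain := ⟨sai u, hu⟩ with hxdef
    set y : C.adjoint.domain := ⟨sbi v, hv⟩ with hydef
    have hadj : ⟪(C.adjoint y : H₀), ((x : H₀))⟫_ℂ = ⟪(y : H₁), C x⟫_ℂ :=
      (C.adjoint_isFormalAdjoint hdense) y x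
    have h1 : ⟪u, sai (γ (sai u))⟫_ℂ = ⟪sai u, γ (sai u)⟫_ℂ := aux_move saiSA _ _
    have h2 : ⟪u, sai (C.adjoint y)⟫_ℂ = (starRingEnd ℂ) ⟪sbi v, (C x : H₁)⟫_ℂ := by
      rw [aux_move saiSA, ← inner_conj_symm]
      exact congrArg _ hadj
    have h3 : ⟪u, -(sai (γ (sai u))) + sai (C.adjoint y)⟫_ℂ
        = -⟪sai u, γ (sai u)⟫_ℂ + (starRingEnd ℂ) ⟪sbi v, (C x : H₁)⟫_ℂ := by
      rw [inner_add_right, inner_neg_right, h1, h2]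
    have h4 : ⟪v, -(sbi (C x))⟫_ℂ = -⟪sbi v, (C x : H₁)⟫_ℂ := by
      rw [inner_neg_right, aux_move sbiSA]
    rw [h3, h4]
    have hre := hγ (sai u)
    simp only [Complex.add_re, Complex.neg_re, Complex.conj_re]
    linarith
  · intro f g
    classical
    set f' : H₀ := sa f with hf'def
    set g' : H₁ := sb g with hg'def
    let W := WithLp 2 (H₀ × H₁)
    let eL : W ≃L[ℂ] H₀ × H₁ := WithLp.prodContinuousLinearEquiv 2 ℂ H₀ H₁
    let gsub : Submodule ℂ W := C.graph.comap (eL.toLinearEquiv.toLinearMap)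
    have hgclosed : IsClosed (gsub : Set W) := hCclosed.preimage eL.continuous
    haveI : CompleteSpace gsub := hgclosed.completeSpace_coe
    letI : InnerProductSpace ℝ W := InnerProductSpace.rclikeToReal ℂ W
    letI : InnerProductSpace ℝ gsub := InnerProductSpace.rclikeToReal ℂ gsub
    let M : gsub →L[ℝ] W := (gsub.subtypeL).restrictScalars ℝ
    let T : H₀ →L[ℂ] H₀ := α + γ
    let S : H₁ →L[ℂ] H₁ := sbi.comp sbi
    let Ψ : W →L[ℂ] W :=
      (eL.symm.toContinuousLinearMap).comp ((T.prodMap S).comp eL.toContinuousLinearMap)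
    let Ψ' : W →L[ℝ] W := Ψ.restrictScalars ℝ
    let X : gsub →L[ℝ] W →L[ℝ] ℝ := (innerSL ℝ).comp (Ψ'.comp M)
    let B : gsub →L[ℝ] gsub →L[ℝ] ℝ := (X.flip.comp M).flip
    have hBapp : ∀ p q : gsub, B p q =
        (⟪T (p : W).fst, (q : W).fst⟫_ℂ).re + (⟪S (p : W).snd, (q : W).snd⟫_ℂ).re := by
      intro p q
      show X p (M q) = _
      show ⟪Ψ' (M p), M q⟫_ℝ = _
      have h0 : ⟪Ψ' (M p), M q⟫_ℝ = (⟪Ψ ((p : W)), (q : W)⟫_ℂ).re := rfl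
      rw [h0]
      have h2 : Ψ ((p : W)) = eL.symm (T (p : W).fst, S (p : W).snd) := rfl
      rw [h2, WithLp.prod_inner_apply]
      rfl
    set g'' : H₁ := sbi (sbi g') with hg''def
    let w₀ : W := eL.symm (f', g'')
    let L : gsub →L[ℝ] ℝ := ((innerSL ℝ) w₀).comp M
    have hLapp : ∀ q : gsub, L q = (⟪f', (q : W).fst⟫_ℂ).re + (⟪g'', (q : W).snd⟫_ℂ).re := by
      intro q
      show ⟪w₀, M q⟫_ℝ = _
      have h0 : ⟪w₀, M q⟫_ℝ = (⟪w₀, (q : W)⟫_ℂ).re := rfl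
      rw [h0, WithLp.prod_inner_apply]
      rfl
    -- coercivity
    have hsbnorm : ∀ z : H₁, ‖z‖ ≤ (‖sb‖ + 1) * ‖sbi z‖ := by
      intro z
      have h1 : ‖z‖ = ‖sb (sbi z)‖ := by rw [aux_apply hsbi]
      have h2 : ‖sb (sbi z)‖ ≤ ‖sb‖ * ‖sbi z‖ := sb.le_opNorm _
      nlinarith [norm_nonneg (sbi z)]
    set c₂ : ℝ := ((‖sb‖ + 1) ^ 2)⁻¹ with hc₂def
    have hc₂ : 0 < c₂ := by positivity
    set Cm : ℝ := min c c₂ with hCmdef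
    have hCm : 0 < Cm := lt_min hc hc₂
    have hco : ∀ p : gsub, Cm * ‖p‖ * ‖p‖ ≤ B p p := by
      intro p
      rw [hBapp]
      have hfs : (⟪T (p : W).fst, (p : W).fst⟫_ℂ).re ≥ c * ‖(p : W).fst‖ ^ 2 := by
        have h1 := hαc (p : W).fst
        have h2 := hγ (p : W).fst
        have h3 : (⟪T (p : W).fst, (p : W).fst⟫_ℂ).re
            = (⟪(p : W).fst, T (p : W).fst⟫_ℂ).re := by
          have := congrArg Complex.re (inner_conj_symm (T (p : W).fst) (p : W).fst)
          rw [Complex.conj_re] at this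
          exact this.symm
        have h4 : ⟪(p : W).fst, T (p : W).fst⟫_ℂ
            = ⟪(p : W).fst, α (p : W).fst⟫_ℂ + ⟪(p : W).fst, γ (p : W).fst⟫_ℂ := by
          have : T (p : W).fst = α (p : W).fst + γ (p : W).fst := rfl
          rw [this, inner_add_right]
        rw [h3, h4, Complex.add_re]
        linarith
      have hsn : (⟪S (p : W).snd, (p : W).snd⟫_ℂ).re ≥ c₂ * ‖(p : W).snd‖ ^ 2 := by
        have h1 : (⟪S (p : W).snd, (p : W).snd⟫_ℂ).re = ‖sbi (p : W).snd‖ ^ 2 := by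
          have : ⟪S (p : W).snd, (p : W).snd⟫_ℂ = ⟪sbi (p : W).snd, sbi (p : W).snd⟫_ℂ := by
            show ⟪sbi (sbi (p : W).snd), (p : W).snd⟫_ℂ = _
            rw [← aux_move sbiSA]
          rw [this]
          have h0 := inner_self_eq_norm_sq (𝕜 := ℂ) (sbi (p : W).snd)
          rwa [RCLike.re_to_complex] at h0
        have h2 := hsbnorm (p : W).snd
        have h3 : (0:ℝ) < ‖sb‖ + 1 := by positivity
        rw [h1, hc₂def, ge_iff_le, inv_mul_le_iff₀ (by positivity : (0:ℝ) < (‖sb‖ + 1) ^ 2)]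
        nlinarith [norm_nonneg (sbi (p : W).snd), norm_nonneg (p : W).snd]
      have hnp : ‖p‖ ^ 2 = ‖(p : W).fst‖ ^ 2 + ‖(p : W).snd‖ ^ 2 := by
        have h0 : ‖p‖ = ‖(p : W)‖ := rfl
        rw [h0, WithLp.prod_norm_sq_eq_of_L2]
      have hCm1 : Cm ≤ c := min_le_left _ _
      have hCm2 : Cm ≤ c₂ := min_le_right _ _
      nlinarith [norm_nonneg (p : W).fst, norm_nonneg (p : W).snd, sq_nonneg ‖p‖]
    obtain ⟨p₀, hp₀⟩ := lax_solve B Cm hCm hco L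
    set x₁ : H₀ := (p₀ : W).fst with hx₁def
    set x₂ : H₁ := (p₀ : W).snd with hx₂def
    have hmem : (x₁, x₂) ∈ C.graph := p₀.2
    obtain ⟨x₁d, hx₁d0, hx₂d0⟩ := C.mem_graph_iff.mp hmem
    have hx₁d : (x₁d : H₀) = x₁ := hx₁d0
    have hx₂d : C x₁d = x₂ := hx₂d0
    -- the complex variational identity
    have hre0 : ∀ q : gsub,
        (⟪T x₁ - f', (q : W).fst⟫_ℂ + ⟪S x₂ - g'', (q : W).snd⟫_ℂ).re = 0 := by
      intro q
      have h := hp₀ q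
      rw [hBapp, hLapp] at h
      simp only [inner_sub_left, Complex.add_re, Complex.sub_re]
      linarith
    have hz : ∀ q : gsub,
        ⟪T x₁ - f', (q : W).fst⟫_ℂ + ⟪S x₂ - g'', (q : W).snd⟫_ℂ = 0 := by
      intro q
      have h1 := hre0 q
      have h2 := hre0 (Complex.I • q)
      have e1 : ((Complex.I • q : gsub) : W).fst = Complex.I • (q : W).fst := rfl
      have e2 : ((Complex.I • q : gsub) : W).snd = Complex.I • (q : W).snd := rfl
      rw [e1, e2, inner_smul_right, inner_smul_right, ← mul_add, Complex.I_mul_re] at h2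
      apply Complex.ext
      · exact h1
      · have h2' : -(⟪S x₂ - g'', (q : W).snd⟫_ℂ).im + -(⟪T x₁ - f', (q : W).fst⟫_ℂ).im = 0 := by
          rw [Complex.add_im] at h2
          linarith
        simp only [Complex.add_im, Complex.zero_im]
        linarith
    -- membership in the adjoint domain
    set y₀ : H₁ := g'' - sbi (sbi x₂) with hy₀def
    have hw : ∀ xd : C.domain, ⟪T x₁ - f', (xd : H₀)⟫_ℂ = ⟪y₀, C xd⟫_ℂ := by
      intro xd
      have hqmem : (eL.symm ((xd : H₀), C xd) : W) ∈ gsub := by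
        show eL.toLinearEquiv (eL.symm ((xd : H₀), C xd)) ∈ C.graph
        have : eL.toLinearEquiv (eL.symm ((xd : H₀), C xd)) = ((xd : H₀), C xd) := rfl
        rw [this]
        exact C.mem_graph xd
      have h := hz ⟨eL.symm ((xd : H₀), C xd), hqmem⟩
      have e1 : ((⟨eL.symm ((xd : H₀), C xd), hqmem⟩ : gsub) : W).fst = (xd : H₀) := rfl
      have e2 : ((⟨eL.symm ((xd : H₀), C xd), hqmem⟩ : gsub) : W).snd = C xd := rfl
      rw [e1, e2] at h
      have : ⟪T x₁ - f', (xd : H₀)⟫_ℂ = -⟪S x₂ - g'', C xd⟫_ℂ := by linear_combination h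
      rw [this, ← inner_neg_left]
      congr 1
      rw [hy₀def]
      show -(S x₂ - g'') = g'' - S x₂
      abel
    have hy₀mem : y₀ ∈ C.adjoint.domain :=
      LinearPMap.mem_adjoint_domain_of_exists _ ⟨T x₁ - f', hw⟩
    have hCadj : C.adjoint ⟨y₀, hy₀mem⟩ = T x₁ - f' :=
      LinearPMap.adjoint_apply_eq hdense _ (fun xd => hw xd)
    -- conclusion
    have e₁ : sai (sa x₁) = x₁ := aux_apply hsai' x₁
    have e₂ : sbi (sb y₀) = y₀ := aux_apply hsbi' y₀
    have hu : sai (sa x₁) ∈ C.domain := by rw [e₁, ← hx₁d]; exact x₁d.2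
    have hv : sbi (sb y₀) ∈ C.adjoint.domain := by rw [e₂]; exact hy₀mem
    refine ⟨sa x₁, sb y₀, hu, hv, ?_, ?_⟩
    · have hCd : C.adjoint ⟨sbi (sb y₀), hv⟩ = T x₁ - f' := by
        rw [show (⟨sbi (sb y₀), hv⟩ : C.adjoint.domain) = ⟨y₀, hy₀mem⟩ from Subtype.ext e₂]
        exact hCadj
      rw [hCd, e₁]
      have hα' : α x₁ = sa (sa x₁) := by rw [← hsasq]; rfl
      have hTx : sai (T x₁ - f') = sa x₁ + sai (γ x₁) - f := by
        have : sai (α x₁) = sa x₁ := by rw [hα']; exact aux_apply hsai' (sa x₁)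
        simp only [T, hf'def, map_sub, map_add, ContinuousLinearMap.add_apply, this,
          aux_apply hsai' f]
      rw [hTx]
      abel
    · have hCx : C ⟨sai (sa x₁), hu⟩ = x₂ := by
        rw [show (⟨sai (sa x₁), hu⟩ : C.domain) = x₁d from Subtype.ext
          (by show sai (sa x₁) = (x₁d : H₀); rw [e₁]; exact hx₁d.symm)]
        exact hx₂d
      rw [hCx]
      have hsby : sb y₀ = g - sbi x₂ := by
        rw [hy₀def, hg''def, map_sub, aux_apply hsbi, aux_apply hsbi, hg'def,
          aux_apply hsbi' g]
      rw [hsby]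
      abel
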